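/- Let K be an infinite field, let A be a K-algebra, let f ∈ K⟨X⟩ be a polynomial, and let V be the K-linear span of the image of f on A. Then the set I = {g ∈ K⟨X⟩ : every evaluation of g at elements of A lies in V} is a T-Lie ideal of K⟨X⟩: it is a K-linear subspace, for every g ∈ I and every h ∈ K⟨X⟩ the commutator [h, g] = hg − gh lies in I, and φ(g) ∈ I for every g ∈ I and every K-algebra endomorphism φ of K⟨X⟩. -/

import Mathlib

open Polynomial

/-- Vandermonde-style argument: if a module-valued polynomial function over an infinite
field vanishes everywhere, all its coefficients vanish. -/
private lemma vandermonde_aux {K M : Type*} [Field K] [Infinite K] [AddCommGroup M]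
    [Module K M] (n : ℕ) (u : ℕ → M)
    (h : ∀ t : K, ∑ k ∈ Finset.range n, t ^ k • u k = 0) :
    ∀ k < n, u k = 0 := by
  intro k hk
  rw [← Module.forall_dual_apply_eq_zero_iff K]
  intro φ
  set p : Polynomial K := ∑ j ∈ Finset.range n, Polynomial.monomial j (φ (u j)) with hp
  have hroot : ∀ t : K, p.eval t = 0 := by
    intro t
    have h2 := congrArg φ (h t)
    simp only [map_sum, map_smul, map_zero, smul_eq_mul] at h2
    simp only [hp, Polynomial.eval_finset_sum, Polynomial.eval_monomial]
    calc ∑ j ∈ Finset.range n, φ (u j) * t ^ j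
        = ∑ j ∈ Finset.range n, t ^ j * φ (u j) := by
          exact Finset.sum_congr rfl fun j _ => mul_comm _ _
      _ = 0 := h2
  have hp0 : p = 0 :=
    p.eq_zero_of_infinite_isRoot (Set.infinite_univ.mono (fun x _ => hroot x))
  have hc : p.coeff k = φ (u k) := by
    simp [hp, Polynomial.finset_sum_coeff, Polynomial.coeff_monomial,
      Finset.sum_ite_eq, hk]
  rw [hp0] at hc
  simpa using hc.symm

/-- Evaluating a free-algebra element at `aₙ + ε·[b,aₙ]` (truncated at degree 1 via
polynomial coefficients): the constant coefficient is the plain evaluation and the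
degree-one coefficient is the commutator with `b` of the plain evaluation. -/
private lemma coeff_eval_poly {K A : Type*} [CommSemiring K] [Ring A] [Algebra K A]
    (b : A) (a : ℕ → A) (g : FreeAlgebra K ℕ) :
    ((FreeAlgebra.lift K (fun n => Polynomial.C (a n) +
        Polynomial.C (b * a n - a n * b) * Polynomial.X) g).coeff 0
        = FreeAlgebra.lift K a g) ∧
    ((FreeAlgebra.lift K (fun n => Polynomial.C (a n) +
        Polynomial.C (b * a n - a n * b) * Polynomial.X) g).coeff 1
        = b * FreeAlgebra.lift K a g - FreeAlgebra.lift K a g * b) := by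
  set Φ := FreeAlgebra.lift K (fun n => Polynomial.C (a n) +
      Polynomial.C (b * a n - a n * b) * Polynomial.X) with hΦ
  induction g using FreeAlgebra.induction with
  | grade0 r =>
      constructor
      · simp [Polynomial.algebraMap_apply, Polynomial.coeff_C]
      · simp only [AlgHom.commutes]
        rw [Polynomial.algebraMap_apply]
        simp [Polynomial.coeff_C, Algebra.commutes]
  | grade1 n =>
      constructor
      · simp [hΦ]
      · simp [hΦ]
  | mul x y hx hy =>
      obtain ⟨hx0, hx1⟩ := hx
      obtain ⟨hy0, hy1⟩ := hy
      constructor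
      · rw [map_mul, map_mul, Polynomial.mul_coeff_zero, hx0, hy0]
      · rw [map_mul, map_mul]
        have hmul : (Φ x * Φ y).coeff 1 =
            (Φ x).coeff 0 * (Φ y).coeff 1 + (Φ x).coeff 1 * (Φ y).coeff 0 := by
          rw [Polynomial.coeff_mul, Finset.Nat.sum_antidiagonal_eq_sum_range_succ_mk]
          simp [Finset.sum_range_succ]
        rw [hmul, hx0, hx1, hy0, hy1]
        noncomm_ring
  | add x y hx hy =>
      obtain ⟨hx0, hx1⟩ := hx
      obtain ⟨hy0, hy1⟩ := hy
      constructor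
      · rw [map_add, map_add, Polynomial.coeff_add, hx0, hy0]
      · rw [map_add, map_add, Polynomial.coeff_add, hx1, hy1]
        noncomm_ring

/-- Over an infinite field, the linear span of the image of a polynomial is a Lie ideal
of the algebra. -/
private lemma lie_mem_span {K A : Type*} [Field K] [Infinite K] [Ring A] [Algebra K A]
    (f : FreeAlgebra K ℕ) (b : A) {v : A}
    (hv : v ∈ Submodule.span K {y : A | ∃ a : ℕ → A, FreeAlgebra.lift K a f = y}) :
    b * v - v * b ∈ Submodule.span K {y : A | ∃ a : ℕ → A, FreeAlgebra.lift K a f = y} := by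
  set V := Submodule.span K {y : A | ∃ a : ℕ → A, FreeAlgebra.lift K a f = y} with hV
  induction hv using Submodule.span_induction with
  | zero => simp
  | add x y hx hy ihx ihy =>
      have : b * (x + y) - (x + y) * b = (b * x - x * b) + (b * y - y * b) := by
        noncomm_ring
      rw [this]; exact V.add_mem ihx ihy
  | smul c x hx ihx =>
      have : b * (c • x) - (c • x) * b = c • (b * x - x * b) := by
        rw [mul_smul_comm, smul_mul_assoc, smul_sub]
      rw [this]; exact V.smul_mem c ihx
  | mem x hx =>
      obtain ⟨a, rfl⟩ := hx
      set Φ : FreeAlgebra K ℕ →ₐ[K] Polynomial A :=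
        FreeAlgebra.lift K (fun n => Polynomial.C (a n) +
          Polynomial.C (b * a n - a n * b) * Polynomial.X) with hΦ
      set p : Polynomial A := Φ f with hp
      set n : ℕ := p.natDegree + 2 with hn
      -- the evaluations of p at scalars all lie in V
      have hval : ∀ t : K, ∑ k ∈ Finset.range n, t ^ k • p.coeff k ∈ V := by
        intro t
        set E : Polynomial A →ₐ[K] A :=
          Polynomial.eval₂AlgHom (AlgHom.id K A) (algebraMap K A t)
            (fun c => (Algebra.commutes t c).symm) with hE
        have hcomp : E.comp Φ =
            FreeAlgebra.lift K (fun m => a m + t • (b * a m - a m * b)) := by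
          apply FreeAlgebra.hom_ext
          funext m
          simp only [Function.comp_apply, AlgHom.coe_comp, hΦ, FreeAlgebra.lift_ι_apply]
          have hEC : ∀ c : A, E (Polynomial.C c) = c := fun c => Polynomial.eval₂_C _ _
          have hEX : E Polynomial.X = algebraMap K A t := Polynomial.eval₂_X _ _
          rw [map_add, map_mul, hEC, hEC, hEX, ← Algebra.commutes t, ← Algebra.smul_def]
        have hmem : E p ∈ V := by
          have : E p = FreeAlgebra.lift K (fun m => a m + t • (b * a m - a m * b)) f := by
            rw [hp, ← hcomp]; rfl
          rw [this]
          exact Submodule.subset_span ⟨_, rfl⟩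
        have hsum : E p = ∑ k ∈ Finset.range n, t ^ k • p.coeff k := by
          have h1 : E p = Polynomial.eval₂ (RingHom.id A) (algebraMap K A t) p := rfl
          rw [h1, Polynomial.eval₂_eq_sum_range' (RingHom.id A)
            (by omega : p.natDegree < n) (algebraMap K A t)]
          refine Finset.sum_congr rfl fun k _ => ?_
          rw [RingHom.id_apply, ← map_pow, ← Algebra.commutes (t ^ k), ← Algebra.smul_def]
        rwa [hsum] at hmem
      -- Vandermonde: all coefficients of p lie in V
      have hcoeff : ∀ k < n, p.coeff k ∈ V := by
        intro k hk
        have h0 : ∀ t : K, ∑ j ∈ Finset.range n, t ^ j • V.mkQ (p.coeff j) = 0 := by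
          intro t
          calc ∑ j ∈ Finset.range n, t ^ j • V.mkQ (p.coeff j)
              = V.mkQ (∑ j ∈ Finset.range n, t ^ j • p.coeff j) := by
                rw [map_sum]; simp
            _ = 0 := (Submodule.Quotient.mk_eq_zero V).mpr (hval t)
        have h3 : V.mkQ (p.coeff k) = 0 :=
          vandermonde_aux n (fun j => V.mkQ (p.coeff j)) h0 k hk
        rwa [Submodule.mkQ_apply, Submodule.Quotient.mk_eq_zero] at h3
      have h1 : p.coeff 1 = b * FreeAlgebra.lift K a f - FreeAlgebra.lift K a f * b :=
        (coeff_eval_poly b a f).2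
      rw [← h1]
      exact hcoeff 1 (by omega)

theorem polynomials_with_image_in_span_is_TLie_ideal {K A : Type*} [Field K] [Infinite K]
    [Ring A] [Algebra K A] (f : FreeAlgebra K ℕ) :
    let V : Submodule K A :=
      Submodule.span K {y : A | ∃ a : ℕ → A, FreeAlgebra.lift K a f = y}
    let I : Set (FreeAlgebra K ℕ) :=
      {g : FreeAlgebra K ℕ | ∀ a : ℕ → A, FreeAlgebra.lift K a g ∈ V}
    (0 : FreeAlgebra K ℕ) ∈ I ∧
      (∀ g₁ ∈ I, ∀ g₂ ∈ I, g₁ + g₂ ∈ I) ∧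
      (∀ c : K, ∀ g ∈ I, c • g ∈ I) ∧
      (∀ g ∈ I, ∀ h : FreeAlgebra K ℕ, h * g - g * h ∈ I) ∧
      (∀ g ∈ I, ∀ φ : FreeAlgebra K ℕ →ₐ[K] FreeAlgebra K ℕ, φ g ∈ I) := by
  intro V I
  refine ⟨?_, ?_, ?_, ?_, ?_⟩
  · intro a; simp only [map_zero]; exact V.zero_mem
  · intro g₁ h₁ g₂ h₂ a
    rw [map_add]; exact V.add_mem (h₁ a) (h₂ a)
  · intro c g hg a
    rw [map_smul]; exact V.smul_mem c (hg a)
  · intro g hg h a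
    rw [map_sub, map_mul, map_mul]
    exact lie_mem_span f (FreeAlgebra.lift K a h) (hg a)
  · intro g hg φ a
    have hcomp : (FreeAlgebra.lift K a).comp φ =
        FreeAlgebra.lift K (fun m => FreeAlgebra.lift K a (φ (FreeAlgebra.ι K m))) := by
      apply FreeAlgebra.hom_ext
      funext m
      simp
    have : FreeAlgebra.lift K a (φ g) =
        FreeAlgebra.lift K (fun m => FreeAlgebra.lift K a (φ (FreeAlgebra.ι K m))) g := by
      rw [← hcomp]; rfl
    rw [this]
    exact hg _
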